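/- Let (X, μ) be a measure space with μ(X) < ∞, let α > 0, and let ω : X × X → ℝ be bounded, measurable, and symmetric (ω(x,y) = ω(y,x)). Define J : L²(X,ℝ) → ℝ by J(F) = ∫_X ∫_X ω(x,y) Σ_α(F(x) − F(y)) dμ(x) dμ(y). Then for all F, G ∈ L²(X,ℝ), the Gateaux derivative of J at F in direction G exists and equals d/dt J(F + tG)|_{t=0} = 2 ∫_X ∫_X ω(x,y) σ_α(F(x) − F(y)) G(x) dμ(y) dμ(x). -/

import Mathlib

open MeasureTheory

/-- The piecewise affine sigmoid `σ_α(ρ) = min{1, max{αρ, -1}}`. -/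
noncomputable def sigmoid (α : ℝ) (ρ : ℝ) : ℝ :=
  min 1 (max (α * ρ) (-1))

/-- The antiderivative `Σ_α(ρ) = ∫₀^ρ σ_α(s) ds` of the sigmoid vanishing at `0`. -/
noncomputable def sigmoidPrimitive (α : ℝ) (ρ : ℝ) : ℝ :=
  ∫ s in (0:ℝ)..ρ, sigmoid α s

lemma abs_sigmoid_le_one (α ρ : ℝ) : |sigmoid α ρ| ≤ 1 := by
  rw [abs_le]
  constructor
  · exact le_min (by norm_num) (le_max_right _ _)
  · exact min_le_left _ _

lemma sigmoid_neg (α ρ : ℝ) : sigmoid α (-ρ) = - sigmoid α ρ := by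
  simp only [sigmoid, mul_neg, min_def, max_def]
  split_ifs <;> linarith

lemma continuous_sigmoid_pw (α : ℝ) : Continuous (sigmoid α) := by
  unfold sigmoid
  fun_prop

lemma hasDerivAt_sigmoidPrimitive (α ρ : ℝ) :
    HasDerivAt (sigmoidPrimitive α) (sigmoid α ρ) ρ := by
  refine intervalIntegral.integral_hasDerivAt_right
    ((continuous_sigmoid_pw α).intervalIntegrable (μ := MeasureTheory.volume) _ _) ?_ ((continuous_sigmoid_pw α).continuousAt)
  exact (continuous_sigmoid_pw α).stronglyMeasurable.stronglyMeasurableAtFilter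

lemma sigmoidPrimitive_lipschitz (α a b : ℝ) :
    |sigmoidPrimitive α a - sigmoidPrimitive α b| ≤ |a - b| := by
  have h : sigmoidPrimitive α a - sigmoidPrimitive α b = ∫ s in b..a, sigmoid α s := by
    unfold sigmoidPrimitive
    exact intervalIntegral.integral_interval_sub_left (a := 0) (b := a) (c := b)
      ((continuous_sigmoid_pw α).intervalIntegrable (μ := MeasureTheory.volume) _ _)
      ((continuous_sigmoid_pw α).intervalIntegrable (μ := MeasureTheory.volume) _ _)
  rw [h]
  calc |∫ s in b..a, sigmoid α s| ≤ 1 * |a - b| := by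
        have := intervalIntegral.norm_integral_le_of_norm_le_const
          (f := sigmoid α) (a := b) (b := a) (C := 1) (fun x _ => abs_sigmoid_le_one α x)
        simpa [abs_sub_comm a b] using this
    _ = |a - b| := one_mul _

lemma abs_sigmoidPrimitive_le (α ρ : ℝ) : |sigmoidPrimitive α ρ| ≤ |ρ| := by
  have := sigmoidPrimitive_lipschitz α ρ 0
  simpa [sigmoidPrimitive] using this

lemma lipschitzWith_sigmoidPrimitive (α : ℝ) : LipschitzWith 1 (sigmoidPrimitive α) := by
  apply LipschitzWith.of_dist_le_mul
  intro a b
  rw [Real.dist_eq, Real.dist_eq, NNReal.coe_one, one_mul]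
  exact sigmoidPrimitive_lipschitz α a b

lemma continuous_sigmoidPrimitive (α : ℝ) : Continuous (sigmoidPrimitive α) :=
  (lipschitzWith_sigmoidPrimitive α).continuous


/-- Gateaux derivative of the Wilson–Cowan interaction term
`J(F) = ∫∫ ω(x,y) Σ_α(F(x) - F(y)) dμ dμ` on a finite measure space, for a bounded
measurable symmetric kernel `ω`: for `F, G ∈ L²`,
`d/dt J(F + tG)|_{t=0} = 2 ∫∫ ω(x,y) σ_α(F(x) - F(y)) G(x) dμ(y) dμ(x)`. -/
theorem interaction_gateaux_deriv {X : Type*} [MeasurableSpace X]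
    (μ : Measure X) [IsFiniteMeasure μ] (α : ℝ) (hα : 0 < α)
    (ω : X → X → ℝ) (hmeas : Measurable fun p : X × X => ω p.1 p.2)
    (hbdd : ∃ C : ℝ, ∀ x y, |ω x y| ≤ C)
    (hsymm : ∀ x y, ω x y = ω y x)
    (F G : X → ℝ) (hF : MemLp F 2 μ) (hG : MemLp G 2 μ) :
    HasDerivAt
      (fun t : ℝ =>
        ∫ x, ∫ y, ω x y * sigmoidPrimitive α ((F x + t * G x) - (F y + t * G y)) ∂μ ∂μ)
      (2 * ∫ x, ∫ y, ω x y * sigmoid α (F x - F y) * G x ∂μ ∂μ) 0 := by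
  obtain ⟨C₀, hC₀⟩ := hbdd
  set C : ℝ := max C₀ 0 with hCdef
  have hC0 : 0 ≤ C := le_max_right _ _
  have hωC : ∀ x y, |ω x y| ≤ C := fun x y => (hC₀ x y).trans (le_max_left _ _)
  have hFi : Integrable F μ := hF.integrable one_le_two
  have hGi : Integrable G μ := hG.integrable one_le_two
  set ν : Measure (X × X) := μ.prod μ with hνdef
  have hFm : AEStronglyMeasurable F μ := hF.aestronglyMeasurable
  have hGm : AEStronglyMeasurable G μ := hG.aestronglyMeasurable
  have hum : AEStronglyMeasurable (fun p : X × X => F p.1 - F p.2) ν := hFm.comp_fst.sub hFm.comp_snd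
  have hvm : AEStronglyMeasurable (fun p : X × X => G p.1 - G p.2) ν := hGm.comp_fst.sub hGm.comp_snd
  have hωm : AEStronglyMeasurable (fun p : X × X => ω p.1 p.2) ν := hmeas.aestronglyMeasurable
  have habsint : ∀ (H : X → ℝ), Integrable H μ →
      Integrable (fun p : X × X => |H p.1| + |H p.2|) ν := by
    intro H hH
    have h1 : Integrable (fun p : X × X => |H p.1| * (1 : ℝ)) ν :=
      hH.abs.mul_prod (integrable_const 1)
    have h2 : Integrable (fun p : X × X => (1 : ℝ) * |H p.2|) ν :=
      (integrable_const (1 : ℝ)).mul_prod hH.abs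
    simp only [mul_one, one_mul] at h1 h2
    exact h1.add h2
  -- the parametrized integrand over the product space
  set Φ : ℝ → X × X → ℝ := fun t p =>
    ω p.1 p.2 * sigmoidPrimitive α ((F p.1 - F p.2) + t * (G p.1 - G p.2)) with hΦdef
  set Φ' : X × X → ℝ := fun p =>
    ω p.1 p.2 * (sigmoid α (F p.1 - F p.2) * (G p.1 - G p.2)) with hΦ'def
  have hΦmeas : ∀ t : ℝ, AEStronglyMeasurable (Φ t) ν := by
    intro t
    exact hωm.mul ((continuous_sigmoidPrimitive α).comp_aestronglyMeasurable
      (hum.add (hvm.const_mul t)))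
  have hσum : AEStronglyMeasurable (fun p : X × X => sigmoid α (F p.1 - F p.2)) ν :=
    (continuous_sigmoid_pw α).comp_aestronglyMeasurable hum
  -- integrability of Φ t for every t
  have hΦint : ∀ t : ℝ, Integrable (Φ t) ν := by
    intro t
    have hb : Integrable (fun p : X × X =>
        C * ((|F p.1| + |F p.2|) + |t| * (|G p.1| + |G p.2|))) ν :=
      ((habsint F hFi).add ((habsint G hGi).const_mul |t|)).const_mul C
    refine hb.mono' (hΦmeas t) (Filter.Eventually.of_forall fun p => ?_)
    have h1 : |sigmoidPrimitive α ((F p.1 - F p.2) + t * (G p.1 - G p.2))|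
        ≤ (|F p.1| + |F p.2|) + |t| * (|G p.1| + |G p.2|) := by
      refine (abs_sigmoidPrimitive_le α _).trans ?_
      calc |(F p.1 - F p.2) + t * (G p.1 - G p.2)|
          ≤ |F p.1 - F p.2| + |t * (G p.1 - G p.2)| := abs_add_le _ _
        _ ≤ (|F p.1| + |F p.2|) + |t| * (|G p.1| + |G p.2|) := by
            rw [abs_mul]
            gcongr
            · exact abs_sub _ _
            · exact abs_sub _ _
    calc ‖Φ t p‖ = |ω p.1 p.2| * |sigmoidPrimitive α ((F p.1 - F p.2) + t * (G p.1 - G p.2))| := by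
          rw [Real.norm_eq_abs, hΦdef, abs_mul]
      _ ≤ C * ((|F p.1| + |F p.2|) + |t| * (|G p.1| + |G p.2|)) := by
          apply mul_le_mul (hωC _ _) h1 (abs_nonneg _)
          exact hC0
  -- the Lipschitz bound
  have hboundint : Integrable (fun p : X × X => C * (|G p.1| + |G p.2|)) ν :=
    (habsint G hGi).const_mul C
  have hlip : ∀ p : X × X, LipschitzOnWith (Real.nnabs (C * (|G p.1| + |G p.2|)))
      (fun t => Φ t p) (Metric.ball (0 : ℝ) 1) := by
    intro p
    have hl : LipschitzWith (Real.nnabs (C * (|G p.1| + |G p.2|))) (fun t => Φ t p) := by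
      apply LipschitzWith.of_dist_le_mul
      intro s t
      rw [Real.coe_nnabs, Real.dist_eq, Real.dist_eq]
      have habs : |C * (|G p.1| + |G p.2|)| = C * (|G p.1| + |G p.2|) :=
        abs_of_nonneg (mul_nonneg hC0 (by positivity))
      rw [habs]
      have h1 : |Φ s p - Φ t p| = |ω p.1 p.2| *
          |sigmoidPrimitive α ((F p.1 - F p.2) + s * (G p.1 - G p.2)) -
           sigmoidPrimitive α ((F p.1 - F p.2) + t * (G p.1 - G p.2))| := by
        rw [hΦdef, ← mul_sub, abs_mul]
      rw [h1]
      have h2 : |sigmoidPrimitive α ((F p.1 - F p.2) + s * (G p.1 - G p.2)) -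
          sigmoidPrimitive α ((F p.1 - F p.2) + t * (G p.1 - G p.2))|
          ≤ (|G p.1| + |G p.2|) * |s - t| := by
        refine (sigmoidPrimitive_lipschitz α _ _).trans ?_
        have : ((F p.1 - F p.2) + s * (G p.1 - G p.2)) -
            ((F p.1 - F p.2) + t * (G p.1 - G p.2)) = (G p.1 - G p.2) * (s - t) := by ring
        rw [this, abs_mul]
        gcongr
        exact abs_sub _ _
      calc |ω p.1 p.2| * |sigmoidPrimitive α ((F p.1 - F p.2) + s * (G p.1 - G p.2)) -
           sigmoidPrimitive α ((F p.1 - F p.2) + t * (G p.1 - G p.2))|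
          ≤ C * ((|G p.1| + |G p.2|) * |s - t|) :=
            mul_le_mul (hωC _ _) h2 (abs_nonneg _) hC0
        _ = C * (|G p.1| + |G p.2|) * |s - t| := by ring
    exact hl.lipschitzOnWith
  -- pointwise differentiability
  have hdiff : ∀ p : X × X, HasDerivAt (fun t => Φ t p) (Φ' p) 0 := by
    intro p
    have h1 : HasDerivAt (fun t : ℝ => (F p.1 - F p.2) + t * (G p.1 - G p.2))
        (G p.1 - G p.2) 0 := by
      simpa using (hasDerivAt_mul_const (G p.1 - G p.2)).const_add (F p.1 - F p.2)
    have h2 := (hasDerivAt_sigmoidPrimitive α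
      ((F p.1 - F p.2) + 0 * (G p.1 - G p.2))).comp 0 h1
    have h3 := h2.const_mul (ω p.1 p.2)
    simpa [hΦdef, hΦ'def, Function.comp_def] using h3
  -- apply the dominated-derivative theorem
  have hΦ'meas : AEStronglyMeasurable Φ' ν := hωm.mul (hσum.mul hvm)
  obtain ⟨hΦ'int, hderiv⟩ :=
    hasDerivAt_integral_of_dominated_loc_of_lip (μ := ν) (F := Φ) (x₀ := (0 : ℝ))
      (bound := fun p : X × X => C * (|G p.1| + |G p.2|)) (Metric.ball_mem_nhds 0 one_pos)
      (Filter.Eventually.of_forall hΦmeas) (hΦint 0) hΦ'meas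
      (Filter.Eventually.of_forall hlip) hboundint (Filter.Eventually.of_forall hdiff)
  -- identify the function
  have hfun : (fun t : ℝ =>
        ∫ x, ∫ y, ω x y * sigmoidPrimitive α ((F x + t * G x) - (F y + t * G y)) ∂μ ∂μ)
      = fun t : ℝ => ∫ p, Φ t p ∂ν := by
    funext t
    have hkey : ∀ x y : X, (F x + t * G x) - (F y + t * G y)
        = (F x - F y) + t * (G x - G y) := by intro x y; ring
    simp_rw [hkey]
    exact integral_integral (hΦint t)
  -- integrability of the two pieces of Φ'
  have hA : Integrable (fun p : X × X =>
      ω p.1 p.2 * sigmoid α (F p.1 - F p.2) * G p.1) ν := by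
    refine hboundint.mono' ((hωm.mul hσum).mul hGm.comp_fst)
      (Filter.Eventually.of_forall fun p => ?_)
    rw [Real.norm_eq_abs, abs_mul, abs_mul]
    calc |ω p.1 p.2| * |sigmoid α (F p.1 - F p.2)| * |G p.1|
        ≤ C * 1 * |G p.1| := by
          gcongr
          · exact hωC _ _
          · exact abs_sigmoid_le_one _ _
      _ ≤ C * (|G p.1| + |G p.2|) := by
          rw [mul_one]
          have := abs_nonneg (G p.2)
          nlinarith [abs_nonneg (G p.1)]
  have hB : Integrable (fun p : X × X =>
      ω p.1 p.2 * sigmoid α (F p.1 - F p.2) * G p.2) ν := by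
    refine hboundint.mono' ((hωm.mul hσum).mul hGm.comp_snd)
      (Filter.Eventually.of_forall fun p => ?_)
    rw [Real.norm_eq_abs, abs_mul, abs_mul]
    calc |ω p.1 p.2| * |sigmoid α (F p.1 - F p.2)| * |G p.2|
        ≤ C * 1 * |G p.2| := by
          gcongr
          · exact hωC _ _
          · exact abs_sigmoid_le_one _ _
      _ ≤ C * (|G p.1| + |G p.2|) := by
          rw [mul_one]
          nlinarith [abs_nonneg (G p.1), abs_nonneg (G p.2), hC0]
  -- the swap identity
  have hswap : ∫ p, ω p.1 p.2 * sigmoid α (F p.1 - F p.2) * G p.2 ∂ν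
      = - ∫ p, ω p.1 p.2 * sigmoid α (F p.1 - F p.2) * G p.1 ∂ν := by
    rw [← integral_prod_swap (f := fun p : X × X =>
      ω p.1 p.2 * sigmoid α (F p.1 - F p.2) * G p.2), ← integral_neg]
    apply integral_congr_ae
    refine Filter.Eventually.of_forall fun p => ?_
    show ω p.2 p.1 * sigmoid α (F p.2 - F p.1) * G p.1
      = -(ω p.1 p.2 * sigmoid α (F p.1 - F p.2) * G p.1)
    rw [hsymm p.2 p.1, show F p.2 - F p.1 = -(F p.1 - F p.2) by ring, sigmoid_neg]
    ring
  -- identify the derivative value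
  have hval : ∫ p, Φ' p ∂ν
      = 2 * ∫ x, ∫ y, ω x y * sigmoid α (F x - F y) * G x ∂μ ∂μ := by
    have h1 : ∫ p, Φ' p ∂ν = ∫ p, (ω p.1 p.2 * sigmoid α (F p.1 - F p.2) * G p.1
        - ω p.1 p.2 * sigmoid α (F p.1 - F p.2) * G p.2) ∂ν :=
      integral_congr_ae (Filter.Eventually.of_forall fun p => by rw [hΦ'def]; ring)
    rw [h1, integral_sub hA hB, hswap,
      ← integral_integral (f := fun x y => ω x y * sigmoid α (F x - F y) * G x) hA]
    ring
  rw [hfun, ← hval]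
  exact hderiv
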